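/- arXiv:1605.05577 — 5 statements merged into one kernel-verified Lean document; each statement's English description precedes it below -/
import Mathlib

section
/- Assume P(Z) has an orthant associated polyhedron Δ_P = dγ + ℝ_{≥0}^n, and write γ = β/q with β ∈ ℤ_{≥0}^n, q ∈ {1,…,d} and gcd(β₁,…,β_n,q) = 1. Then, substituting x_i ↦ x_i^q for each i and Z ↦ x^β Z, one has P(x₁^q,…,x_n^q, x^β Z) = x^{dβ}·(P̄(Z) + Q(x,Z)) for some polynomial Q(x,Z) ∈ (x₁,…,x_n)·k[[x]][Z] of degree < d in Z (i.e. every coefficient of Q lies in the maximal ideal (x₁,…,x_n) of k[[x]]). -/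
open Polynomial Pointwise
open scoped Classical

namespace IrredCrit

variable {n : ℕ} {k : Type*} [Field k]

/-- The coefficient `c_{α,j}` of `x^α Z^j` in `P`. -/
noncomputable def seriesCoeff (P : Polynomial (MvPowerSeries (Fin n) k))
    (α : Fin n →₀ ℕ) (j : ℕ) : k :=
  MvPowerSeries.coeff α (P.coeff j)

/-- The nonnegative orthant in `ℝ^n`. -/
def orthant (n : ℕ) : Set (Fin n → ℝ) := {v | ∀ i, 0 ≤ v i}

/-- The associated polyhedron `Δ_P`. -/
noncomputable def assocPolyhedron (P : Polynomial (MvPowerSeries (Fin n) k)) :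
    Set (Fin n → ℝ) :=
  convexHull ℝ {v : Fin n → ℝ | ∃ (α : Fin n →₀ ℕ) (j : ℕ), j < P.natDegree ∧
      seriesCoeff P α j ≠ 0 ∧
      v = fun i => (P.natDegree : ℝ) * (α i : ℝ) / ((P.natDegree : ℝ) - (j : ℝ))}
    + orthant n

/-- `P_In` for a polynomial with orthant associated polyhedron with vertex `dγ`. -/
noncomputable def PIn (P : Polynomial (MvPowerSeries (Fin n) k)) (d : ℕ)
    (γ : Fin n → ℚ) : Polynomial (MvPolynomial (Fin n) k) :=
  Polynomial.X ^ d + ∑ j ∈ Finset.range d,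
    Polynomial.C
      (if h : ∃ α : Fin n →₀ ℕ, ∀ i, (α i : ℚ) = ((d : ℚ) - (j : ℚ)) * γ i then
        MvPolynomial.monomial h.choose (seriesCoeff P h.choose j)
      else 0) * Polynomial.X ^ j

/-- `P̄(Z) = P_In(1,…,1,Z)`. -/
noncomputable def Pbar (P : Polynomial (MvPowerSeries (Fin n) k)) (d : ℕ)
    (γ : Fin n → ℚ) : Polynomial k :=
  (PIn P d γ).map (MvPolynomial.eval fun _ => (1 : k))

/-- The substitution `x_i ↦ x_i^q` on power series. -/
noncomputable def powSubst (q : ℕ) (f : MvPowerSeries (Fin n) k) :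
    MvPowerSeries (Fin n) k :=
  fun β : Fin n →₀ ℕ =>
    if h : ∃ α : Fin n →₀ ℕ, β = q • α then MvPowerSeries.coeff h.choose f else 0

/-- `P(x₁^q,…,x_n^q, x^β Z)`. -/
noncomputable def substQβ (q : ℕ) (β : Fin n →₀ ℕ)
    (P : Polynomial (MvPowerSeries (Fin n) k)) :
    Polynomial (MvPowerSeries (Fin n) k) :=
  ∑ j ∈ Finset.range (P.natDegree + 1),
    Polynomial.C (powSubst q (P.coeff j) *
      MvPowerSeries.monomial (R := k) (j • β) 1) * Polynomial.X ^ j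

/-! ### Auxiliary lemmas -/

lemma coeff_powSubst (q : ℕ) (f : MvPowerSeries (Fin n) k) (e : Fin n →₀ ℕ) :
    MvPowerSeries.coeff e (powSubst q f) =
      if h : ∃ α : Fin n →₀ ℕ, e = q • α then MvPowerSeries.coeff h.choose f else 0 := rfl

lemma smul_inj {q : ℕ} (hq : 0 < q) {α₁ α₂ : Fin n →₀ ℕ} (h : q • α₁ = q • α₂) : α₁ = α₂ := by
  ext i
  have := DFunLike.congr_fun h i
  simp only [Finsupp.smul_apply, smul_eq_mul] at this
  exact Nat.eq_of_mul_eq_mul_left hq this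

lemma powSubst_one {q : ℕ} (hq : 0 < q) : powSubst q (1 : MvPowerSeries (Fin n) k) = 1 := by
  ext e
  rw [coeff_powSubst]
  split
  · rename_i h
    rw [MvPowerSeries.coeff_one, MvPowerSeries.coeff_one]
    by_cases h0 : h.choose = 0
    · have he : e = 0 := by rw [h.choose_spec, h0, smul_zero]
      rw [if_pos h0, if_pos he]
    · have he : e ≠ 0 := by
        intro he
        exact h0 (smul_inj hq (show q • h.choose = q • 0 by
          rw [smul_zero, ← h.choose_spec, he]))
      rw [if_neg h0, if_neg he]
  · rename_i h
    rw [MvPowerSeries.coeff_one, if_neg]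
    intro h0
    exact h ⟨0, by rw [h0, smul_zero]⟩

lemma support_bound (P : Polynomial (MvPowerSeries (Fin n) k)) (d : ℕ) (hd : 1 ≤ d)
    (hdeg : P.natDegree = d) (γ : Fin n → ℚ)
    (hΔ : assocPolyhedron P = {fun i => (d : ℝ) * (γ i : ℝ)} + orthant n)
    (β : Fin n →₀ ℕ) (q : ℕ) (hq1 : 1 ≤ q)
    (hγβ : ∀ i, γ i = (β i : ℚ) / (q : ℚ)) :
    ∀ (α : Fin n →₀ ℕ) (j : ℕ), j < d → seriesCoeff P α j ≠ 0 →
      ∀ i, (d - j) * β i ≤ q * α i := by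
  intro α j hj hne i
  set v : Fin n → ℝ := fun i => (d : ℝ) * (α i : ℝ) / ((d : ℝ) - (j : ℝ)) with hv
  have hmem : v ∈ assocPolyhedron P := by
    have h1 : v ∈ {v : Fin n → ℝ | ∃ (α : Fin n →₀ ℕ) (j : ℕ), j < P.natDegree ∧
        seriesCoeff P α j ≠ 0 ∧
        v = fun i => (P.natDegree : ℝ) * (α i : ℝ) / ((P.natDegree : ℝ) - (j : ℝ))} :=
      ⟨α, j, by rw [hdeg]; exact hj, hne, by rw [hdeg, hv]⟩
    have h2 := subset_convexHull ℝ _ h1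
    have h0 : (0 : Fin n → ℝ) ∈ orthant n := fun i => le_refl 0
    have := Set.add_mem_add h2 h0
    rwa [add_zero] at this
  rw [hΔ, Set.mem_add] at hmem
  obtain ⟨a, ha, b, hb, hab⟩ := hmem
  rw [Set.mem_singleton_iff] at ha
  subst ha
  have hbi : 0 ≤ b i := hb i
  have hvi : (d : ℝ) * (γ i : ℝ) + b i = v i := congrFun hab i
  have hle : (d : ℝ) * (γ i : ℝ) ≤ v i := by linarith
  have hd' : (0 : ℝ) < d := by exact_mod_cast hd
  have hq' : (0 : ℝ) < q := by exact_mod_cast hq1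
  have hdj' : (0 : ℝ) < (d : ℝ) - (j : ℝ) := by
    have : (j : ℝ) < d := by exact_mod_cast hj
    linarith
  have hγi : ((γ i : ℚ) : ℝ) = (β i : ℝ) / (q : ℝ) := by
    rw [hγβ i]; push_cast; ring
  have key : ((d : ℝ) * (β i : ℝ)) / (q : ℝ) ≤ ((d : ℝ) * (α i : ℝ)) / ((d : ℝ) - (j : ℝ)) := by
    rw [mul_div_assoc, ← hγi]
    exact hle
  rw [div_le_div_iff₀ hq' hdj'] at key
  have goal' : ((d : ℝ) - (j : ℝ)) * (β i : ℝ) ≤ (q : ℝ) * (α i : ℝ) := by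
    have h2 : (d : ℝ) * (((d : ℝ) - (j : ℝ)) * (β i : ℝ)) ≤ (d : ℝ) * ((q : ℝ) * (α i : ℝ)) := by
      nlinarith [key]
    exact le_of_mul_le_mul_left h2 hd'
  have hfin : (((d - j) * β i : ℕ) : ℝ) ≤ ((q * α i : ℕ) : ℝ) := by
    push_cast [Nat.cast_sub (le_of_lt hj)]
    exact goal'
  exact_mod_cast hfin

lemma cond_iff {d q : ℕ} {β : Fin n →₀ ℕ} {γ : Fin n → ℚ} (hq1 : 1 ≤ q)
    (hγβ : ∀ i, γ i = (β i : ℚ) / (q : ℚ)) (j : ℕ) (hj : j ≤ d) (α : Fin n →₀ ℕ) :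
    (d - j) • β = q • α ↔ ∀ i, (α i : ℚ) = ((d : ℚ) - (j : ℚ)) * γ i := by
  have hq0 : (q : ℚ) ≠ 0 := Nat.cast_ne_zero.mpr (by omega)
  constructor
  · intro h i
    have hi : (d - j) * β i = q * α i := by
      have := DFunLike.congr_fun h i
      simpa [Finsupp.smul_apply] using this
    have hiQ : ((d : ℚ) - (j : ℚ)) * (β i : ℚ) = (q : ℚ) * (α i : ℚ) := by
      have h2 : (((d - j) * β i : ℕ) : ℚ) = ((q * α i : ℕ) : ℚ) := by exact_mod_cast hi
      push_cast [Nat.cast_sub hj] at h2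
      linarith
    rw [hγβ i, ← mul_div_assoc, eq_div_iff hq0]
    linarith
  · intro h
    ext i
    simp only [Finsupp.smul_apply, smul_eq_mul]
    have := h i
    rw [hγβ i, ← mul_div_assoc, eq_comm, div_eq_iff hq0] at this
    have hQ : (((d - j) * β i : ℕ) : ℚ) = ((q * α i : ℕ) : ℚ) := by
      push_cast [Nat.cast_sub hj]
      linarith
    exact_mod_cast hQ

lemma PIn_coeff_lt (P : Polynomial (MvPowerSeries (Fin n) k)) (d : ℕ) (γ : Fin n → ℚ)
    (j : ℕ) (hj : j < d) :
    (PIn P d γ).coeff j =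
      (if h : ∃ α : Fin n →₀ ℕ, ∀ i, (α i : ℚ) = ((d : ℚ) - (j : ℚ)) * γ i then
        MvPolynomial.monomial h.choose (seriesCoeff P h.choose j)
      else 0) := by
  rw [PIn, Polynomial.coeff_add, Polynomial.coeff_X_pow, if_neg (Nat.ne_of_lt hj), zero_add,
    Polynomial.finset_sum_coeff]
  rw [Finset.sum_eq_single_of_mem j (Finset.mem_range.mpr hj)]
  · rw [Polynomial.coeff_C_mul, Polynomial.coeff_X_pow, if_pos rfl, mul_one]
  · intro b _ hbj
    rw [Polynomial.coeff_C_mul, Polynomial.coeff_X_pow, if_neg (Ne.symm hbj), mul_zero]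

lemma PIn_coeff_d (P : Polynomial (MvPowerSeries (Fin n) k)) (d : ℕ) (γ : Fin n → ℚ) :
    (PIn P d γ).coeff d = 1 := by
  rw [PIn, Polynomial.coeff_add, Polynomial.coeff_X_pow, if_pos rfl,
    Polynomial.finset_sum_coeff, Finset.sum_eq_zero, add_zero]
  intro b hb
  rw [Polynomial.coeff_C_mul, Polynomial.coeff_X_pow,
    if_neg (Nat.ne_of_gt (Finset.mem_range.mp hb)), mul_zero]

lemma PIn_natDegree_le (P : Polynomial (MvPowerSeries (Fin n) k)) (d : ℕ) (γ : Fin n → ℚ) :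
    (PIn P d γ).natDegree ≤ d := by
  rw [Polynomial.natDegree_le_iff_coeff_eq_zero]
  intro N hN
  rw [PIn, Polynomial.coeff_add, Polynomial.coeff_X_pow, if_neg (Nat.ne_of_gt hN), zero_add,
    Polynomial.finset_sum_coeff, Finset.sum_eq_zero]
  intro b hb
  have hbN : N ≠ b := by
    have := Finset.mem_range.mp hb
    omega
  rw [Polynomial.coeff_C_mul, Polynomial.coeff_X_pow, if_neg hbN, mul_zero]
/-- **Key equation (2.1).** If `P` has an orthant associated polyhedron
`Δ_P = dγ + ℝ_{≥0}^n` with `γ = β/q`, `β ∈ ℤ_{≥0}^n`, `1 ≤ q ≤ d`,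
`gcd(β₁,…,β_n,q) = 1`, then `P(x₁^q,…,x_n^q, x^β Z) = x^{dβ}·(P̄(Z) + Q(x,Z))` for some
`Q(x,Z) ∈ (x₁,…,x_n)·k[[x]][Z]` of degree `< d` in `Z`. -/
theorem key_equation
    (P : Polynomial (MvPowerSeries (Fin n) k)) (d : ℕ) (hd : 1 ≤ d)
    (hmonic : P.Monic) (hdeg : P.natDegree = d) (hne : P ≠ Polynomial.X ^ d)
    (γ : Fin n → ℚ) (hγ : ∀ i, 0 ≤ γ i)
    (hΔ : assocPolyhedron P =
      {fun i => (d : ℝ) * (γ i : ℝ)} + orthant n)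
    (β : Fin n →₀ ℕ) (q : ℕ) (hq1 : 1 ≤ q) (hqd : q ≤ d)
    (hγβ : ∀ i, γ i = (β i : ℚ) / (q : ℚ))
    (hgcd : Nat.gcd (Finset.univ.gcd fun i => β i) q = 1) :
    ∃ Q : Polynomial (MvPowerSeries (Fin n) k),
      Q.degree < d ∧
      (∀ j, MvPowerSeries.constantCoeff (σ := Fin n) (R := k) (Q.coeff j) = 0) ∧
      substQβ q β P =
        Polynomial.C (MvPowerSeries.monomial (R := k) (d • β) 1) *
          ((Pbar P d γ).map (MvPowerSeries.C (σ := Fin n) (R := k)) + Q) := by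
  have hq0 : 0 < q := hq1
  have hsupp := support_bound P d hd hdeg γ hΔ β q hq1 hγβ
  have hPd : P.coeff d = 1 := by rw [← hdeg]; exact hmonic.coeff_natDegree
  set A : ℕ → MvPowerSeries (Fin n) k :=
    fun j => powSubst q (P.coeff j) * MvPowerSeries.monomial (R := k) (j • β) 1 with hA
  set S : ℕ → MvPowerSeries (Fin n) k :=
    fun j => (fun e => MvPowerSeries.coeff (e + d • β) (A j)) with hS
  have hScoeff : ∀ (j : ℕ) (e : Fin n →₀ ℕ),
      MvPowerSeries.coeff e (S j) = MvPowerSeries.coeff (e + d • β) (A j) := fun _ _ => rfl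
  -- vanishing below `d • β`
  have hvanish : ∀ j, j ≤ d → ∀ e : Fin n →₀ ℕ, ¬ d • β ≤ e →
      MvPowerSeries.coeff e (A j) = 0 := by
    intro j hjd e he
    show MvPowerSeries.coeff e
      (powSubst q (P.coeff j) * MvPowerSeries.monomial (R := k) (j • β) 1) = 0
    rw [MvPowerSeries.coeff_mul_monomial]
    split
    · rename_i hle
      rw [mul_one, coeff_powSubst]
      split
      · rename_i hex
        rcases lt_or_eq_of_le hjd with hj | hj
        · by_contra hc0
          apply he
          rw [Finsupp.le_def]
          intro i
          have hbound := hsupp hex.choose j hj hc0 i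
          have h1 : (e - j • β) i = q * hex.choose i := by
            have := DFunLike.congr_fun hex.choose_spec i
            simpa [Finsupp.smul_apply] using this
          have h2 : j * β i ≤ e i := by
            have := Finsupp.le_def.mp hle i
            simpa [Finsupp.smul_apply] using this
          have h3 : (e - j • β) i = e i - j * β i := by
            simp [Finsupp.tsub_apply, Finsupp.smul_apply]
          have hsum : (d - j) * β i + j * β i = d * β i := by
            rw [← add_mul, Nat.sub_add_cancel (le_of_lt hj)]
          have h4 : (d • β) i = d * β i := by simp [Finsupp.smul_apply]
          omega
        · exact absurd (hj ▸ hle) he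
      · rfl
    · rfl
  -- `A j = monomial (d•β) 1 * S j`
  have hAS : ∀ j, j ≤ d → A j = MvPowerSeries.monomial (R := k) (d • β) 1 * S j := by
    intro j hjd
    ext e
    rw [MvPowerSeries.coeff_monomial_mul]
    split
    · rename_i hle
      rw [one_mul, hScoeff, tsub_add_cancel_of_le hle]
    · rename_i hle
      exact hvanish j hjd e hle
  -- the coefficient at `d • β` matches the coefficient of `Pbar`
  have hc : ∀ j, j ≤ d → MvPowerSeries.coeff (d • β) (A j) = (Pbar P d γ).coeff j := by
    intro j hjd
    have hjβ : j • β ≤ d • β := by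
      rw [Finsupp.le_def]
      intro i
      simp only [Finsupp.smul_apply, smul_eq_mul]
      exact Nat.mul_le_mul_right _ hjd
    have hδ : d • β - j • β = (d - j) • β := by
      ext i
      simp [Finsupp.tsub_apply, Finsupp.smul_apply, Nat.sub_mul]
    show MvPowerSeries.coeff (d • β)
      (powSubst q (P.coeff j) * MvPowerSeries.monomial (R := k) (j • β) 1) = _
    rw [MvPowerSeries.coeff_mul_monomial, if_pos hjβ, mul_one, hδ, coeff_powSubst]
    rcases lt_or_eq_of_le hjd with hj | hj
    · rw [Pbar, Polynomial.coeff_map, PIn_coeff_lt P d γ j hj]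
      by_cases h1 : ∃ α : Fin n →₀ ℕ, (d - j) • β = q • α
      · rw [dif_pos h1]
        have h2 : ∃ α : Fin n →₀ ℕ, ∀ i, (α i : ℚ) = ((d : ℚ) - (j : ℚ)) * γ i :=
          ⟨h1.choose, (cond_iff hq1 hγβ j (le_of_lt hj) h1.choose).mp h1.choose_spec⟩
        rw [dif_pos h2]
        have hch : h1.choose = h2.choose :=
          smul_inj hq0 (h1.choose_spec.symm.trans
            ((cond_iff hq1 hγβ j (le_of_lt hj) h2.choose).mpr h2.choose_spec))
        have hev : MvPolynomial.eval (fun _ => (1 : k))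
            (MvPolynomial.monomial h2.choose (seriesCoeff P h2.choose j)) =
              seriesCoeff P h2.choose j := by
          rw [MvPolynomial.eval_monomial]
          simp [Finsupp.prod]
        rw [hev, hch]
        rfl
      · rw [dif_neg h1, dif_neg, map_zero]
        intro h2
        exact h1 ⟨h2.choose, (cond_iff hq1 hγβ j (le_of_lt hj) h2.choose).mpr h2.choose_spec⟩
    · subst hj
      rw [Nat.sub_self, zero_smul]
      have h1 : ∃ α : Fin n →₀ ℕ, (0 : Fin n →₀ ℕ) = q • α := ⟨0, by rw [smul_zero]⟩
      rw [dif_pos h1]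
      have hch : h1.choose = 0 := smul_inj hq0 (h1.choose_spec.symm.trans (smul_zero q).symm)
      rw [Pbar, Polynomial.coeff_map, PIn_coeff_d, map_one]
      rw [show MvPowerSeries.coeff h1.choose (P.coeff j) =
        MvPowerSeries.coeff 0 (P.coeff j) from
          congrArg (fun δ => MvPowerSeries.coeff δ (P.coeff j)) hch]
      rw [hPd, MvPowerSeries.coeff_one, if_pos rfl]
  have hAd : A d = MvPowerSeries.monomial (R := k) (d • β) 1 := by
    show powSubst q (P.coeff d) * MvPowerSeries.monomial (R := k) (d • β) 1 = _
    rw [hPd, powSubst_one hq0, one_mul]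
  have hSd : S d = 1 := by
    ext e
    rw [hScoeff, hAd, MvPowerSeries.coeff_monomial, MvPowerSeries.coeff_one]
    by_cases h0 : e = 0
    · rw [if_pos (by rw [h0, zero_add]), if_pos h0]
    · rw [if_neg (fun hx => h0 (add_eq_right.mp hx)), if_neg h0]
  have hpbard : (Pbar P d γ).coeff d = 1 := by
    rw [← hc d le_rfl, hAd, MvPowerSeries.coeff_monomial_same]
  refine ⟨∑ j ∈ Finset.range (d + 1),
      Polynomial.C (S j - MvPowerSeries.C (σ := Fin n) (R := k) ((Pbar P d γ).coeff j)) *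
        Polynomial.X ^ j, ?_, ?_, ?_⟩
  · -- degree bound
    rw [Finset.sum_range_succ, hSd, hpbard, map_one, sub_self, map_zero, zero_mul, add_zero]
    refine lt_of_le_of_lt (Polynomial.degree_sum_le _ _) ?_
    rw [Finset.sup_lt_iff (by exact_mod_cast WithBot.bot_lt_coe d)]
    intro j hj
    exact lt_of_le_of_lt (Polynomial.degree_C_mul_X_pow_le _ _)
      (by exact_mod_cast Finset.mem_range.mp hj)
  · -- constant coefficients vanish
    intro m
    rw [Polynomial.finset_sum_coeff, map_sum]
    apply Finset.sum_eq_zero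
    intro j hj
    have hjd : j ≤ d := Nat.lt_succ_iff.mp (Finset.mem_range.mp hj)
    rw [Polynomial.coeff_C_mul, map_mul, map_sub, MvPowerSeries.constantCoeff_C]
    have hS0 : MvPowerSeries.constantCoeff (σ := Fin n) (R := k) (S j) = (Pbar P d γ).coeff j := by
      rw [← MvPowerSeries.coeff_zero_eq_constantCoeff_apply, hScoeff, zero_add, hc j hjd]
    rw [hS0, sub_self, zero_mul]
  · -- the key equation itself
    have hnd : ((Pbar P d γ).map (MvPowerSeries.C (σ := Fin n) (R := k))).natDegree < d + 1 := by
      apply Nat.lt_succ_of_le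
      refine le_trans Polynomial.natDegree_map_le ?_
      rw [Pbar]
      exact le_trans Polynomial.natDegree_map_le (PIn_natDegree_le P d γ)
    have hrep : (Pbar P d γ).map (MvPowerSeries.C (σ := Fin n) (R := k)) =
        ∑ j ∈ Finset.range (d + 1),
          Polynomial.C (MvPowerSeries.C (σ := Fin n) (R := k) ((Pbar P d γ).coeff j)) *
            Polynomial.X ^ j := by
      conv_lhs => rw [Polynomial.as_sum_range' _ (d + 1) hnd]
      refine Finset.sum_congr rfl fun j _ => ?_
      rw [← Polynomial.C_mul_X_pow_eq_monomial, Polynomial.coeff_map]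
    rw [substQβ, hdeg, hrep, ← Finset.sum_add_distrib, Finset.mul_sum]
    refine Finset.sum_congr rfl fun j hj => ?_
    have hjd : j ≤ d := Nat.lt_succ_iff.mp (Finset.mem_range.mp hj)
    show Polynomial.C (A j) * Polynomial.X ^ j = _
    rw [← add_mul, ← Polynomial.C_add, ← mul_assoc, ← Polynomial.C_mul]
    rw [show MvPowerSeries.C (σ := Fin n) (R := k) ((Pbar P d γ).coeff j) +
        (S j - MvPowerSeries.C (σ := Fin n) (R := k) ((Pbar P d γ).coeff j)) = S j by ring]
    rw [← hAS j hjd]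

end IrredCrit
end

section
/- Let k be an algebraically closed field of characteristic different from 2. Then the power series (x³ − y⁵)² − y¹¹ is not a square in k[[x,y]]: there is no h ∈ k[[x,y]] with h² = (x³ − y⁵)² − y¹¹. -/
open Finsupp

noncomputable section NSq

private def wt : Fin 2 → ℕ := ![5, 3]

private lemma wt_ne_zero : ∀ x, wt x ≠ 0 := by
  intro x; fin_cases x <;> simp [wt]

private def fiber (n : ℕ) : Finset (Fin 2 →₀ ℕ) :=
  (Finsupp.finite_of_nat_weight_le wt wt_ne_zero n).toFinset.filter
    (fun d => Finsupp.weight wt d = n)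

private lemma mem_fiber {n : ℕ} {d : Fin 2 →₀ ℕ} :
    d ∈ fiber n ↔ Finsupp.weight wt d = n := by
  simp only [fiber, Finset.mem_filter, Set.Finite.mem_toFinset, Set.mem_setOf_eq,
    and_iff_right_iff_imp]
  intro h; exact le_of_eq h

variable {R : Type*} [CommRing R]

private lemma sum_fiber_mul (F G : MvPowerSeries (Fin 2) R) (n : ℕ) :
    ∑ d ∈ fiber n, MvPowerSeries.coeff d (F * G)
      = ∑ pq ∈ Finset.HasAntidiagonal.antidiagonal n,
          (∑ a ∈ fiber pq.1, MvPowerSeries.coeff a F) *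
          (∑ b ∈ fiber pq.2, MvPowerSeries.coeff b G) := by
  classical
  have hL : ∑ d ∈ fiber n, MvPowerSeries.coeff d (F * G)
      = ∑ ab ∈ (fiber n).biUnion Finset.HasAntidiagonal.antidiagonal,
          MvPowerSeries.coeff ab.1 F * MvPowerSeries.coeff ab.2 G := by
    rw [Finset.sum_biUnion]
    · exact Finset.sum_congr rfl fun d _ => MvPowerSeries.coeff_mul d F G
    · intro d₁ _ d₂ _ hne
      simp only [Function.onFun, Finset.disjoint_left]
      intro ab h1 h2
      rw [Finset.HasAntidiagonal.mem_antidiagonal] at h1 h2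
      exact hne (h1 ▸ h2)
  have hR : ∑ pq ∈ Finset.HasAntidiagonal.antidiagonal n,
          (∑ a ∈ fiber pq.1, MvPowerSeries.coeff a F) *
          (∑ b ∈ fiber pq.2, MvPowerSeries.coeff b G)
      = ∑ ab ∈ (Finset.HasAntidiagonal.antidiagonal n).biUnion (fun pq => fiber pq.1 ×ˢ fiber pq.2),
          MvPowerSeries.coeff ab.1 F * MvPowerSeries.coeff ab.2 G := by
    rw [Finset.sum_biUnion]
    · exact Finset.sum_congr rfl fun pq _ => by
        rw [Finset.sum_mul_sum, Finset.sum_product]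
    · intro p₁ hp₁ p₂ hp₂ hne
      simp only [Function.onFun, Finset.disjoint_left]
      intro ab h1 h2
      simp only [Finset.mem_product, mem_fiber] at h1 h2
      exact hne (by ext <;> [rw [← h1.1, h2.1]; rw [← h1.2, h2.2]])
  rw [hL, hR]
  congr 1
  ext ab
  simp only [Finset.mem_biUnion, mem_fiber, Finset.HasAntidiagonal.mem_antidiagonal,
    Finset.mem_product, Prod.exists]
  constructor
  · rintro ⟨d, hd, hab⟩
    exact ⟨_, _, by rw [← hd, ← hab, map_add], rfl, rfl⟩
  · rintro ⟨p, q, hpq, hp, hq⟩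
    exact ⟨ab.1 + ab.2, by rw [map_add, hp, hq, hpq], rfl⟩

private lemma sum_fiber_monomial (e : Fin 2 →₀ ℕ) (c : R) (n : ℕ) :
    ∑ d ∈ fiber n, MvPowerSeries.coeff d (MvPowerSeries.monomial e c)
      = if Finsupp.weight wt e = n then c else 0 := by
  classical
  simp only [MvPowerSeries.coeff_monomial]
  rw [Finset.sum_ite_eq' (fiber n) e (fun _ => c)]
  simp [mem_fiber]

end NSq

/-- Over an algebraically closed field of characteristic different from 2, the power
series `(x³ − y⁵)² − y¹¹` is not a square in `k[[x,y]]`. -/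
theorem not_isSquare {k : Type*} [Field k] [IsAlgClosed k] (hchar : ringChar k ≠ 2) :
    ¬ ∃ h : MvPowerSeries (Fin 2) k,
        h ^ 2 = (MvPowerSeries.X 0 ^ 3 - MvPowerSeries.X 1 ^ 5) ^ 2 -
          MvPowerSeries.X 1 ^ 11 := by
  classical
  rintro ⟨h, hh⟩
  -- the image of h under substitution x ↦ t^5, y ↦ t^3
  set g : PowerSeries k := PowerSeries.mk
    (fun n => ∑ d ∈ fiber n, MvPowerSeries.coeff d h) with hg
  -- f as a sum of monomials
  have hf : (MvPowerSeries.X 0 ^ 3 - MvPowerSeries.X 1 ^ 5) ^ 2 -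
        MvPowerSeries.X (σ := Fin 2) (R := k) 1 ^ 11
      = MvPowerSeries.monomial (single 0 6) 1
        + MvPowerSeries.monomial (single 0 3 + single 1 5) (-2)
        + MvPowerSeries.monomial (single 1 10) 1
        + MvPowerSeries.monomial (single 1 11) (-1) := by
    have e1 : (MvPowerSeries.X 0 ^ 3 - MvPowerSeries.X 1 ^ 5) ^ 2 -
        MvPowerSeries.X (σ := Fin 2) (R := k) 1 ^ 11
      = MvPowerSeries.X 0 ^ 6 + (-2 : k) • (MvPowerSeries.X 0 ^ 3 * MvPowerSeries.X 1 ^ 5)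
        + MvPowerSeries.X 1 ^ 10 + (-1 : k) • MvPowerSeries.X 1 ^ 11 := by
      rw [Algebra.smul_def, Algebra.smul_def, map_neg, map_neg, map_ofNat, map_one]
      ring
    rw [e1]
    simp only [MvPowerSeries.X_pow_eq, MvPowerSeries.monomial_mul_monomial, one_mul]
    rw [← map_smul, ← map_smul]
    simp [smul_eq_mul]
  -- g ^ 2 = - X ^ 33
  have hg2 : g ^ 2 = - (PowerSeries.X : PowerSeries k) ^ 33 := by
    ext n
    rw [pow_two, PowerSeries.coeff_mul]
    have : ∀ pq ∈ Finset.HasAntidiagonal.antidiagonal n,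
        PowerSeries.coeff pq.1 g * PowerSeries.coeff pq.2 g
          = (∑ a ∈ fiber pq.1, MvPowerSeries.coeff a h) *
            (∑ b ∈ fiber pq.2, MvPowerSeries.coeff b h) := by
      intro pq _; simp [hg]
    rw [Finset.sum_congr rfl this, ← sum_fiber_mul, ← pow_two, hh, hf]
    simp only [map_add, Finset.sum_add_distrib, sum_fiber_monomial]
    have w1 : Finsupp.weight wt (single (0 : Fin 2) 6) = 30 := by
      simp [Finsupp.weight_apply, wt]
    have w2a : Finsupp.weight wt (single (0 : Fin 2) 3) = 15 := by
      simp [Finsupp.weight_apply, wt]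
    have w2b : Finsupp.weight wt (single (1 : Fin 2) 5) = 15 := by
      simp [Finsupp.weight_apply, wt]
    have w3 : Finsupp.weight wt (single (1 : Fin 2) 10) = 30 := by
      simp [Finsupp.weight_apply, wt]
    have w4 : Finsupp.weight wt (single (1 : Fin 2) 11) = 33 := by
      simp [Finsupp.weight_apply, wt]
    rw [w1, w2a, w2b, w3, w4]
    rw [map_neg, PowerSeries.coeff_X_pow]
    by_cases h30 : n = 30
    · subst h30; norm_num
    · by_cases h33 : n = 33
      · subst h33; norm_num
      · simp [h30, h33, Ne.symm h30, Ne.symm h33]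
  -- order argument: order (g^2) is even, order (-X^33) = 33
  have horder : (g ^ 2).order = 33 := by
    have : (g ^ 2 : PowerSeries k) = PowerSeries.monomial 33 (-1 : k) := by
      rw [hg2, PowerSeries.X_pow_eq, ← map_neg]
    rw [this, PowerSeries.order_monomial_of_ne_zero 33 (-1 : k) (by simp)]
    rfl
  rw [pow_two, PowerSeries.order_mul] at horder
  have htop : g.order ≠ ⊤ := by
    intro ht
    rw [ht] at horder
    simp at horder
  obtain ⟨m, hm⟩ := WithTop.ne_top_iff_exists.mp htop
  rw [← hm] at horder
  simp only [ENat.some_eq_coe, ← Nat.cast_add] at horder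
  have : (m + m : ℕ) = 33 := by
    have h : ((m + m : ℕ) : ℕ∞) = ((33 : ℕ) : ℕ∞) := by push_cast; exact horder
    exact Nat.cast_injective h
  omega
end

section
/- Let k be an algebraically closed field of characteristic different from 2. Then the monic polynomial P(Z) := Z² − (x³ − y⁵)² + y¹¹ is irreducible in k[[x,y]][Z]. -/
open MvPowerSeries Finsupp

section Aux

variable {k : Type*} [Field k]

/-- The ring hom `k[[x,y]] → k[[x]]` sending `y ↦ 0`. -/
noncomputable def projX : MvPowerSeries (Fin 2) k →+* PowerSeries k where
  toFun φ := PowerSeries.mk fun n => MvPowerSeries.coeff (Finsupp.single 0 n) φ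
  map_one' := by
    ext n
    simp [MvPowerSeries.coeff_one, PowerSeries.coeff_one, Finsupp.single_eq_zero]
  map_mul' φ ψ := by
    ext n
    rw [PowerSeries.coeff_mk, PowerSeries.coeff_mul, MvPowerSeries.coeff_mul,
      Finsupp.antidiagonal_single, Finset.sum_map]
    simp [PowerSeries.coeff_mk]
  map_zero' := by
    ext n
    simp
  map_add' φ ψ := by
    ext n
    simp

theorem projX_eq_zero_iff (φ : MvPowerSeries (Fin 2) k) :
    projX φ = 0 ↔ (MvPowerSeries.X 1 : MvPowerSeries (Fin 2) k) ∣ φ := by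
  rw [MvPowerSeries.X_dvd_iff]
  constructor
  · intro h m hm
    have hmeq : m = Finsupp.single 0 (m 0) := by
      ext i
      fin_cases i
      · simp
      · simpa using hm
    have h' := congrArg (PowerSeries.coeff (m 0)) h
    rw [hmeq]
    simpa [projX] using h'
  · intro h
    ext n
    simp only [projX, RingHom.coe_mk, MonoidHom.coe_mk, OneHom.coe_mk, PowerSeries.coeff_mk,
      map_zero]
    exact h _ (by simp [Finsupp.single_apply])

theorem X1_dvd_or (a b : MvPowerSeries (Fin 2) k)
    (h : (MvPowerSeries.X 1 : MvPowerSeries (Fin 2) k) ∣ a * b) :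
    (MvPowerSeries.X 1 : MvPowerSeries (Fin 2) k) ∣ a ∨
      (MvPowerSeries.X 1 : MvPowerSeries (Fin 2) k) ∣ b := by
  rw [← projX_eq_zero_iff] at h ⊢
  rw [← projX_eq_zero_iff (k := k) b]
  rw [map_mul] at h
  exact mul_eq_zero.mp h

theorem X1_ne_zero : (MvPowerSeries.X 1 : MvPowerSeries (Fin 2) k) ≠ 0 := by
  intro h
  have := congrArg (MvPowerSeries.coeff (Finsupp.single (1 : Fin 2) 1)) h
  simp at this

/-- Descent: if `y ∤ b` and `a * b = y ^ n` then `b` is invertible. -/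
theorem aux_unit (b : MvPowerSeries (Fin 2) k)
    (hb : ¬ (MvPowerSeries.X 1 : MvPowerSeries (Fin 2) k) ∣ b) :
    ∀ n (a : MvPowerSeries (Fin 2) k),
      a * b = (MvPowerSeries.X 1 : MvPowerSeries (Fin 2) k) ^ n → ∃ u, u * b = 1 := by
  intro n
  induction n with
  | zero => exact fun a h => ⟨a, by simpa using h⟩
  | succ n ih =>
    intro a h
    have hdvd : (MvPowerSeries.X 1 : MvPowerSeries (Fin 2) k) ∣ a * b := by
      rw [h]; exact dvd_pow_self _ n.succ_ne_zero
    rcases X1_dvd_or a b hdvd with ha | hbb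
    · obtain ⟨a', rfl⟩ := ha
      refine ih a' (mul_left_cancel₀ X1_ne_zero ?_)
      rw [← mul_assoc, h, pow_succ']
    · exact absurd hbb hb

theorem key (f a b : MvPowerSeries (Fin 2) k)
    (hf : MvPowerSeries.constantCoeff f = 0)
    (hab : a * b = (MvPowerSeries.X 1 : MvPowerSeries (Fin 2) k) ^ 11)
    (hsum : a + b = 2 * f)
    (hb : ¬ (MvPowerSeries.X 1 : MvPowerSeries (Fin 2) k) ∣ b) : False := by
  obtain ⟨u, hu⟩ := aux_unit b hb 11 a hab
  have h1 : MvPowerSeries.constantCoeff a *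
      MvPowerSeries.constantCoeff b = 0 := by
    have := congrArg (MvPowerSeries.constantCoeff) hab
    simpa [map_pow, MvPowerSeries.constantCoeff_X] using this
  have h2 : MvPowerSeries.constantCoeff a +
      MvPowerSeries.constantCoeff b = 0 := by
    have := congrArg (MvPowerSeries.constantCoeff) hsum
    simpa [hf] using this
  have hcb : MvPowerSeries.constantCoeff b = 0 := by
    rcases mul_eq_zero.mp h1 with h | h
    · rw [h, zero_add] at h2; exact h2
    · exact h
  have := congrArg (MvPowerSeries.constantCoeff) hu
  rw [map_mul, map_one, hcb, mul_zero] at this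
  exact zero_ne_one this

end Aux

/-- Over an algebraically closed field of characteristic different from 2, the monic
polynomial `P(Z) = Z² − (x³ − y⁵)² + y¹¹` is irreducible in `k[[x,y]][Z]`. -/
theorem example_irreducible {k : Type*} [Field k] [IsAlgClosed k]
    (hchar : ringChar k ≠ 2) :
    Irreducible (Polynomial.X ^ 2 -
        Polynomial.C ((MvPowerSeries.X 0 ^ 3 - MvPowerSeries.X 1 ^ 5) ^ 2) +
        Polynomial.C (MvPowerSeries.X 1 ^ 11) :
      Polynomial (MvPowerSeries (Fin 2) k)) := by
  set f : MvPowerSeries (Fin 2) k := MvPowerSeries.X 0 ^ 3 - MvPowerSeries.X 1 ^ 5 with hfdef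
  set c : MvPowerSeries (Fin 2) k := MvPowerSeries.X 1 ^ 11 - f ^ 2 with hcdef
  have hP : (Polynomial.X ^ 2 -
        Polynomial.C ((MvPowerSeries.X 0 ^ 3 - MvPowerSeries.X 1 ^ 5) ^ 2) +
        Polynomial.C (MvPowerSeries.X 1 ^ 11) :
      Polynomial (MvPowerSeries (Fin 2) k)) = Polynomial.X ^ 2 + Polynomial.C c := by
    rw [hcdef, Polynomial.C_sub]
    ring
  rw [hP]
  have hm : (Polynomial.X ^ 2 + Polynomial.C c).Monic :=
    Polynomial.monic_X_pow_add_C _ two_ne_zero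
  have hnd : (Polynomial.X ^ 2 + Polynomial.C c).natDegree = 2 :=
    Polynomial.natDegree_X_pow_add_C
  by_contra hred
  obtain ⟨c₁, c₂, h0, h1⟩ := (hm.not_irreducible_iff_exists_add_mul_eq_coeff hnd).mp hred
  simp only [Polynomial.coeff_add, Polynomial.coeff_X_pow, Polynomial.coeff_C] at h0 h1
  norm_num at h0 h1
  -- h0 : c = c₁ * c₂, h1 : 0 = c₁ + c₂
  have hab : (f - c₁) * (f + c₁) = (MvPowerSeries.X 1 : MvPowerSeries (Fin 2) k) ^ 11 := by
    have hc : c = MvPowerSeries.X 1 ^ 11 - f ^ 2 := hcdef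
    linear_combination -h0 + c₁ * h1 + hc
  have hsum : (f - c₁) + (f + c₁) = 2 * f := by ring
  have hf0 : MvPowerSeries.constantCoeff f = 0 := by
    rw [hfdef]
    simp [MvPowerSeries.constantCoeff_X]
  by_cases hb : (MvPowerSeries.X 1 : MvPowerSeries (Fin 2) k) ∣ f + c₁
  · by_cases ha : (MvPowerSeries.X 1 : MvPowerSeries (Fin 2) k) ∣ f - c₁
    · -- both divisible: X 1 ∣ 2 * X 0 ^ 3, contradiction
      have h2f : (MvPowerSeries.X 1 : MvPowerSeries (Fin 2) k) ∣ 2 * f := by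
        rw [← hsum]; exact dvd_add ha hb
      have h5 : (MvPowerSeries.X 1 : MvPowerSeries (Fin 2) k) ∣
          2 * MvPowerSeries.X 1 ^ 5 := Dvd.dvd.mul_left (dvd_pow_self _ (by norm_num)) 2
      have hx3 : (MvPowerSeries.X 1 : MvPowerSeries (Fin 2) k) ∣
          2 * MvPowerSeries.X 0 ^ 3 := by
        have heq : (2 : MvPowerSeries (Fin 2) k) * MvPowerSeries.X 0 ^ 3
            = 2 * f + 2 * MvPowerSeries.X 1 ^ 5 := by rw [hfdef]; ring
        rw [heq]
        exact dvd_add h2f h5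
      rw [MvPowerSeries.X_dvd_iff] at hx3
      have hc3 := hx3 (Finsupp.single 0 3) (by simp [Finsupp.single_apply])
      rw [two_mul, map_add, MvPowerSeries.coeff_X_pow] at hc3
      simp only [if_pos] at hc3
      exact Ring.two_ne_zero hchar (by linear_combination hc3)
    · exact key f (f + c₁) (f - c₁) hf0 (by rw [mul_comm]; exact hab)
        (by rw [add_comm]; exact hsum) ha
  · exact key f (f - c₁) (f + c₁) hf0 hab hsum hb
end

section
/- Let k be a field of characteristic different from 2 and let P(Z) := Z² − (x³ − y⁵)² + y¹¹ ∈ k[[x,y]][Z]. Then the associated polyhedron of P is Δ_P = convexHull{(6,0), (0,10)} + ℝ_{≥0}², which has the two distinct vertices (6,0) and (0,10); in particular there is no γ ∈ ℚ_{≥0}² such that Δ_P = 2γ + ℝ_{≥0}², i.e. P does not have an orthant associated polyhedron. -/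
open Polynomial Pointwise
open scoped Classical

namespace IrredCrit

variable {n : ℕ} {k : Type*} [Field k]

/-! ### Auxiliary material -/

/-- The constant coefficient of the example polynomial. -/
noncomputable def c2 (k : Type*) [Field k] : MvPowerSeries (Fin 2) k :=
  MvPowerSeries.X 1 ^ 11 - (MvPowerSeries.X 0 ^ 3 - MvPowerSeries.X 1 ^ 5) ^ 2

theorem c2_eq : c2 k
    = MvPowerSeries.monomial (Finsupp.single 1 11) 1
      - MvPowerSeries.monomial (Finsupp.single 0 6) 1
      + (MvPowerSeries.monomial (Finsupp.single 0 3 + Finsupp.single 1 5) 1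
        + MvPowerSeries.monomial (Finsupp.single 0 3 + Finsupp.single 1 5) 1)
      - MvPowerSeries.monomial (Finsupp.single 1 10) 1 := by
  have h2 : (MvPowerSeries.X 0 : MvPowerSeries (Fin 2) k) ^ 3 * MvPowerSeries.X 1 ^ 5
      = MvPowerSeries.monomial (Finsupp.single 0 3 + Finsupp.single 1 5) 1 := by
    rw [MvPowerSeries.X_pow_eq, MvPowerSeries.X_pow_eq,
      MvPowerSeries.monomial_mul_monomial, one_mul]
  rw [c2, ← MvPowerSeries.X_pow_eq 0 6, ← h2, ← MvPowerSeries.X_pow_eq 1 10,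
    ← MvPowerSeries.X_pow_eq 1 11]
  ring

theorem coeff_c2 (α : Fin 2 →₀ ℕ) (h : MvPowerSeries.coeff α (c2 k) ≠ 0) :
    α = Finsupp.single 0 6 ∨ α = Finsupp.single 0 3 + Finsupp.single 1 5 ∨
      α = Finsupp.single 1 10 ∨ α = Finsupp.single 1 11 := by
  by_contra hc
  push_neg at hc
  obtain ⟨h1, h2, h3, h4⟩ := hc
  apply h
  rw [c2_eq]
  simp [MvPowerSeries.coeff_monomial_ne h1, MvPowerSeries.coeff_monomial_ne h2,
    MvPowerSeries.coeff_monomial_ne h3, MvPowerSeries.coeff_monomial_ne h4]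

theorem coeff_c2_60 : MvPowerSeries.coeff (Finsupp.single 0 6) (c2 k) = -1 := by
  rw [c2_eq]
  have h1 : (Finsupp.single 0 6 : Fin 2 →₀ ℕ) ≠ Finsupp.single 1 11 := by
    intro h; have := DFunLike.congr_fun h 0; simp [Finsupp.single_apply] at this
  have h2 : (Finsupp.single 0 6 : Fin 2 →₀ ℕ) ≠ Finsupp.single 0 3 + Finsupp.single 1 5 := by
    intro h; have := DFunLike.congr_fun h 1; simp [Finsupp.single_apply] at this
  have h3 : (Finsupp.single 0 6 : Fin 2 →₀ ℕ) ≠ Finsupp.single 1 10 := by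
    intro h; have := DFunLike.congr_fun h 0; simp [Finsupp.single_apply] at this
  simp [MvPowerSeries.coeff_monomial_ne h1, MvPowerSeries.coeff_monomial_ne h2,
    MvPowerSeries.coeff_monomial_ne h3, MvPowerSeries.coeff_monomial_same]

theorem coeff_c2_010 : MvPowerSeries.coeff (Finsupp.single 1 10) (c2 k) = -1 := by
  rw [c2_eq]
  have h1 : (Finsupp.single 1 10 : Fin 2 →₀ ℕ) ≠ Finsupp.single 1 11 := by
    intro h; have := DFunLike.congr_fun h 1; simp [Finsupp.single_apply] at this
  have h2 : (Finsupp.single 1 10 : Fin 2 →₀ ℕ) ≠ Finsupp.single 0 3 + Finsupp.single 1 5 := by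
    intro h; have := DFunLike.congr_fun h 1; simp [Finsupp.single_apply] at this
  have h3 : (Finsupp.single 1 10 : Fin 2 →₀ ℕ) ≠ Finsupp.single 0 6 := by
    intro h; have := DFunLike.congr_fun h 1; simp [Finsupp.single_apply] at this
  simp [MvPowerSeries.coeff_monomial_ne h1, MvPowerSeries.coeff_monomial_ne h2,
    MvPowerSeries.coeff_monomial_ne h3, MvPowerSeries.coeff_monomial_same]

/-- The halfspace description of the polyhedron. -/
def Hset : Set (Fin 2 → ℝ) := {x | 0 ≤ x 0 ∧ 0 ≤ x 1 ∧ 30 ≤ 5 * x 0 + 3 * x 1}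

theorem Hset_convex : Convex ℝ Hset := by
  rintro x ⟨hx0, hx1, hx2⟩ y ⟨hy0, hy1, hy2⟩ a b ha hb hab
  refine ⟨?_, ?_, ?_⟩ <;> simp only [Pi.add_apply, Pi.smul_apply, smul_eq_mul] <;> nlinarith

theorem Hset_add_orthant {x w : Fin 2 → ℝ} (hx : x ∈ Hset) (hw : w ∈ orthant 2) :
    x + w ∈ Hset := by
  obtain ⟨h0, h1, h2⟩ := hx
  have w0 := hw 0; have w1 := hw 1
  refine ⟨?_, ?_, ?_⟩ <;> simp only [Pi.add_apply] <;> linarith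

theorem mem_Hset_iff (x : Fin 2 → ℝ) :
    x ∈ convexHull ℝ {(![6, 0] : Fin 2 → ℝ), ![0, 10]} + orthant 2 ↔ x ∈ Hset := by
  constructor
  · rintro ⟨p, hp, w, hw, rfl⟩
    rw [convexHull_pair] at hp
    obtain ⟨u, v, hu, hv, huv, rfl⟩ := hp
    have w0 := hw 0; have w1 := hw 1
    refine ⟨?_, ?_, ?_⟩ <;>
      simp only [Pi.add_apply, Pi.smul_apply, smul_eq_mul, Matrix.cons_val_zero,
        Matrix.cons_val_one, Matrix.head_cons] <;> nlinarith
  · rintro ⟨h0, h1, h2⟩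
    by_cases hx6 : (6:ℝ) ≤ x 0
    · refine ⟨![6,0], ?_, x - ![6,0], ?_, by ring⟩
      · exact subset_convexHull ℝ _ (Set.mem_insert _ _)
      · intro i
        fin_cases i <;> simp <;> linarith
    · push_neg at hx6
      refine ⟨(x 0 / 6) • ![6,0] + (1 - x 0 / 6) • ![0,10], ?_,
        x - ((x 0 / 6) • ![6,0] + (1 - x 0 / 6) • ![0,10]), ?_, by ring⟩
      · rw [convexHull_pair]
        exact ⟨x 0 / 6, 1 - x 0 / 6, by linarith, by linarith, by ring, rfl⟩
      · intro i
        fin_cases i <;> simp <;> nlinarith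

theorem extreme_60 : (![6,0] : Fin 2 → ℝ) ∈ Set.extremePoints ℝ Hset := by
  constructor
  · refine ⟨by norm_num, by norm_num, by norm_num⟩
  · rintro x hx y hy ⟨a, b, ha, hb, hab, hxy⟩
    have phix : 30 ≤ 5 * x 0 + 4 * x 1 := by obtain ⟨h0, h1, h2⟩ := hx; linarith
    have phiy : 30 ≤ 5 * y 0 + 4 * y 1 := by obtain ⟨h0, h1, h2⟩ := hy; linarith
    have h0 : (a • x + b • y) 0 = 6 := by rw [hxy]; norm_num
    have h1 : (a • x + b • y) 1 = 0 := by rw [hxy]; norm_num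
    simp only [Pi.add_apply, Pi.smul_apply, smul_eq_mul] at h0 h1
    have hx30 : 5 * x 0 + 4 * x 1 = 30 := by nlinarith
    have hy30 : 5 * y 0 + 4 * y 1 = 30 := by nlinarith
    have hx1 : x 1 = 0 := by obtain ⟨_, _, _⟩ := hx; linarith
    have hy1 : y 1 = 0 := by obtain ⟨_, _, _⟩ := hy; linarith
    have hx0 : x 0 = 6 := by linarith
    have hy0 : y 0 = 6 := by linarith
    (funext i; fin_cases i) <;> simp [hx0, hx1, hy0, hy1]

theorem extreme_010 : (![0,10] : Fin 2 → ℝ) ∈ Set.extremePoints ℝ Hset := by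
  constructor
  · refine ⟨by norm_num, by norm_num, by norm_num⟩
  · rintro x hx y hy ⟨a, b, ha, hb, hab, hxy⟩
    have phix : 30 ≤ 6 * x 0 + 3 * x 1 := by obtain ⟨h0, h1, h2⟩ := hx; linarith
    have phiy : 30 ≤ 6 * y 0 + 3 * y 1 := by obtain ⟨h0, h1, h2⟩ := hy; linarith
    have h0 : (a • x + b • y) 0 = 0 := by rw [hxy]; norm_num
    have h1 : (a • x + b • y) 1 = 10 := by rw [hxy]; norm_num
    simp only [Pi.add_apply, Pi.smul_apply, smul_eq_mul] at h0 h1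
    have hx30 : 6 * x 0 + 3 * x 1 = 30 := by nlinarith
    have hy30 : 6 * y 0 + 3 * y 1 = 30 := by nlinarith
    have hx0 : x 0 = 0 := by obtain ⟨_, _, _⟩ := hx; nlinarith
    have hy0 : y 0 = 0 := by obtain ⟨_, _, _⟩ := hy; nlinarith
    have hx1 : x 1 = 10 := by linarith
    have hy1 : y 1 = 10 := by linarith
    (funext i; fin_cases i) <;> simp [hx0, hx1, hy0, hy1]

/-- An extreme point of a translated orthant is the translation point. -/
theorem extreme_translate_orthant {g x : Fin 2 → ℝ}
    (hx : x ∈ Set.extremePoints ℝ ({g} + orthant 2)) : x = g := by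
  obtain ⟨hxm, hext⟩ := hx
  obtain ⟨p, hp, w, hw, hpw⟩ := hxm
  rw [Set.mem_singleton_iff] at hp
  subst hp
  have hxw : x = p + w := hpw.symm
  by_contra hne
  have hwne : w ≠ 0 := fun h => hne (by rw [hxw, h, add_zero])
  obtain ⟨i, hi⟩ : ∃ i, w i ≠ 0 := by
    by_contra hc; push_neg at hc; exact hwne (funext hc)
  have hwi : 0 < w i := lt_of_le_of_ne (hw i) (Ne.symm hi)
  set d : Fin 2 → ℝ := fun j => if j = i then w i else 0 with hd
  have hmem1 : x - d ∈ ({p} + orthant 2 : Set (Fin 2 → ℝ)) := by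
    refine ⟨p, rfl, w - d, ?_, by rw [hxw]; ring⟩
    intro j
    by_cases hj : j = i <;> simp [hd, hj, hw j]
  have hmem2 : x + d ∈ ({p} + orthant 2 : Set (Fin 2 → ℝ)) := by
    refine ⟨p, rfl, w + d, ?_, by rw [hxw]; ring⟩
    intro j
    by_cases hj : j = i
    · simp [hd, hj]; linarith
    · simp [hd, hj]; exact hw j
  have hseg : x ∈ openSegment ℝ (x - d) (x + d) :=
    ⟨1/2, 1/2, by norm_num, by norm_num, by norm_num, by
      show (1/2 : ℝ) • (x - d) + (1/2 : ℝ) • (x + d) = x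
      funext j
      simp only [Pi.add_apply, Pi.smul_apply, Pi.sub_apply, smul_eq_mul]
      ring⟩
  have h1 := hext hmem1 hmem2 hseg
  have hji := congr_fun h1 i
  simp [hd] at hji
  exact hi hji

/-! ### The main theorem -/

/-- For `P(Z) = Z² − (x³ − y⁵)² + y¹¹` over a field of characteristic `≠ 2`, the
associated polyhedron is `Δ_P = conv{(6,0),(0,10)} + ℝ_{≥0}²`, with the two distinct
vertices `(6,0)` and `(0,10)`; in particular `P` does not have an orthant associated
polyhedron. -/
theorem example_assocPolyhedron {k : Type*} [Field k] (hchar : ringChar k ≠ 2)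
    (P : Polynomial (MvPowerSeries (Fin 2) k))
    (hP : P = Polynomial.X ^ 2 -
        Polynomial.C ((MvPowerSeries.X 0 ^ 3 - MvPowerSeries.X 1 ^ 5) ^ 2) +
        Polynomial.C (MvPowerSeries.X 1 ^ 11)) :
    assocPolyhedron P =
        convexHull ℝ {(![6, 0] : Fin 2 → ℝ), ![0, 10]} + orthant 2 ∧
      (![6, 0] : Fin 2 → ℝ) ≠ ![0, 10] ∧
      (![6, 0] : Fin 2 → ℝ) ∈ Set.extremePoints ℝ (assocPolyhedron P) ∧
      (![0, 10] : Fin 2 → ℝ) ∈ Set.extremePoints ℝ (assocPolyhedron P) ∧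
      ¬ ∃ γ : Fin 2 → ℚ, (∀ i, 0 ≤ γ i) ∧
        assocPolyhedron P = {fun i => (2 : ℝ) * (γ i : ℝ)} + orthant 2 := by
  have hPQ : P = Polynomial.X ^ 2 + Polynomial.C (c2 k) := by
    rw [hP, c2, map_sub]; ring
  have hdeg : P.natDegree = 2 := by
    rw [hPQ]; exact Polynomial.natDegree_X_pow_add_C
  have hc0 : P.coeff 0 = c2 k := by rw [hPQ]; simp
  have hc1 : P.coeff 1 = 0 := by rw [hPQ]; simp [Polynomial.coeff_X_pow]
  -- the base set of the associated polyhedron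
  set S : Set (Fin 2 → ℝ) := {v : Fin 2 → ℝ | ∃ (α : Fin 2 →₀ ℕ) (j : ℕ), j < P.natDegree ∧
      seriesCoeff P α j ≠ 0 ∧
      v = fun i => (P.natDegree : ℝ) * (α i : ℝ) / ((P.natDegree : ℝ) - (j : ℝ))} with hS
  -- S is contained in Hset
  have hSsub : S ⊆ Hset := by
    rintro v ⟨α, j, hj, hne, rfl⟩
    rw [hdeg] at hj
    interval_cases j
    · rw [seriesCoeff, hc0] at hne
      rcases coeff_c2 α hne with h | h | h | h <;> subst h <;>
        refine ⟨?_, ?_, ?_⟩ <;>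
        simp [hdeg, Finsupp.single_apply] <;> norm_num
    · rw [seriesCoeff, hc1] at hne
      simp at hne
  -- the two vertices belong to S
  have h60S : (![6, 0] : Fin 2 → ℝ) ∈ S := by
    refine ⟨Finsupp.single 0 6, 0, by rw [hdeg]; norm_num, ?_, ?_⟩
    · rw [seriesCoeff, hc0, coeff_c2_60]; norm_num
    · funext i
      fin_cases i <;> simp [hdeg, Finsupp.single_apply] <;> norm_num
  have h010S : (![0, 10] : Fin 2 → ℝ) ∈ S := by
    refine ⟨Finsupp.single 1 10, 0, by rw [hdeg]; norm_num, ?_, ?_⟩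
    · rw [seriesCoeff, hc0, coeff_c2_010]; norm_num
    · funext i
      fin_cases i <;> simp [hdeg, Finsupp.single_apply] <;> norm_num
  -- the associated polyhedron equals Hset
  have hMain : assocPolyhedron P = Hset := by
    apply Set.Subset.antisymm
    · rintro x ⟨p, hp, w, hw, rfl⟩
      have hpH : p ∈ Hset := by
        have : convexHull ℝ S ⊆ Hset := convexHull_min hSsub Hset_convex
        exact this hp
      exact Hset_add_orthant hpH hw
    · intro x hx
      rw [← mem_Hset_iff] at hx
      obtain ⟨p, hp, w, hw, rfl⟩ := hx
      refine ⟨p, ?_, w, hw, rfl⟩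
      refine convexHull_mono ?_ hp
      intro y hy
      rcases hy with h | h
      · rw [h]; exact h60S
      · rw [Set.mem_singleton_iff] at h; rw [h]; exact h010S
  have hneq : (![6, 0] : Fin 2 → ℝ) ≠ ![0, 10] := by
    intro h
    have := congr_fun h 0
    norm_num at this
  refine ⟨?_, hneq, ?_, ?_, ?_⟩
  · rw [hMain]
    exact (Set.ext mem_Hset_iff).symm
  · rw [hMain]; exact extreme_60
  · rw [hMain]; exact extreme_010
  · rintro ⟨γ, hγ, heq⟩
    rw [hMain] at heq
    have e1 : (![6, 0] : Fin 2 → ℝ) = fun i => (2 : ℝ) * (γ i : ℝ) := by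
      apply extreme_translate_orthant
      rw [← heq]; exact extreme_60
    have e2 : (![0, 10] : Fin 2 → ℝ) = fun i => (2 : ℝ) * (γ i : ℝ) := by
      apply extreme_translate_orthant
      rw [← heq]; exact extreme_010
    exact hneq (e1.trans e2.symm)

end IrredCrit
end

section
/- Let k be an algebraically closed field of characteristic different from 2 and let P(Z) := Z² − (x³ − y⁵)² + y¹¹ ∈ k[[x,y]][Z]. Then P is irreducible in k[[x,y]][Z], yet for every ω ∈ ℝ_{>0}² the initial form In_{ω'}(P) is the product of two coprime monic polynomials of degree 1 in Z with coefficients in k[x,y]. In particular, the conclusion of the irreducibility criterion (that In_{ω'}(P) is not a product of two coprime polynomials) fails for polynomials that do not have an orthant associated polyhedron. -/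
open Polynomial Pointwise
open scoped Classical

namespace IrredCrit

variable {n : ℕ} {k : Type*} [Field k]

/-- `ω_{n+1}`, the last component of `ω'`. -/
noncomputable def omegaLast (R : Polynomial (MvPowerSeries (Fin n) k))
    (ω : Fin n → ℝ) : ℝ :=
  sInf {t : ℝ | ∃ (α : Fin n →₀ ℕ) (j : ℕ), j < R.natDegree ∧
    seriesCoeff R α j ≠ 0 ∧ t = (∑ i, (α i : ℝ) * ω i) / ((R.natDegree : ℝ) - (j : ℝ))}

/-- The `j`-th coefficient of the initial form `In_{ω'}(R)`. -/
noncomputable def initCoeff (R : Polynomial (MvPowerSeries (Fin n) k))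
    (ω : Fin n → ℝ) (j : ℕ) : MvPowerSeries (Fin n) k :=
  fun α : Fin n →₀ ℕ =>
    if (∑ i, (α i : ℝ) * ω i) + (j : ℝ) * omegaLast R ω
        = (R.natDegree : ℝ) * omegaLast R ω then seriesCoeff R α j else 0

/-- The initial form `In_{ω'}(R)` of a monic polynomial. -/
noncomputable def initForm (R : Polynomial (MvPowerSeries (Fin n) k))
    (ω : Fin n → ℝ) : Polynomial (MvPowerSeries (Fin n) k) :=
  Polynomial.X ^ R.natDegree + ∑ j ∈ Finset.range R.natDegree,
    Polynomial.C (initCoeff R ω j) * Polynomial.X ^ j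

/-! ### Auxiliary material -/

/-- The exponent `(a, b)`, i.e. the monomial `x^a y^b`. -/
noncomputable def ee (a b : ℕ) : Fin 2 →₀ ℕ := Finsupp.single 0 a + Finsupp.single 1 b

@[simp] lemma ee_apply0 (a b : ℕ) : ee a b 0 = a := by
  simp [ee, Finsupp.single_apply]

@[simp] lemma ee_apply1 (a b : ℕ) : ee a b 1 = b := by
  simp [ee, Finsupp.single_apply]

lemma eq_ee_iff (α : Fin 2 →₀ ℕ) (a b : ℕ) : α = ee a b ↔ α 0 = a ∧ α 1 = b := by
  constructor
  · rintro rfl; simp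
  · rintro ⟨h0, h1⟩
    ext i
    fin_cases i
    · simpa using h0
    · simpa using h1

lemma ee_eq_ee_iff (a b c d : ℕ) : ee a b = ee c d ↔ a = c ∧ b = d := by
  rw [eq_ee_iff]; simp

lemma ee_ne {a b c d : ℕ} (h : a ≠ c ∨ b ≠ d) : ee a b ≠ ee c d := by
  rw [Ne, ee_eq_ee_iff]; tauto

lemma single0_eq_ee (a : ℕ) : Finsupp.single (0 : Fin 2) a = ee a 0 := by
  simp [ee]

lemma single1_eq_ee (b : ℕ) : Finsupp.single (1 : Fin 2) b = ee 0 b := by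
  simp [ee]

lemma pure_x (α : Fin 2 →₀ ℕ) (h : α 1 = 0) : α = ee (α 0) 0 :=
  (eq_ee_iff α _ _).2 ⟨rfl, h⟩

lemma X1_prime : Prime (MvPowerSeries.X 1 : MvPowerSeries (Fin 2) k) := by
  refine ⟨?_, ?_, ?_⟩
  · intro h
    have := MvPowerSeries.coeff_X (R := k) (Finsupp.single (1 : Fin 2) 1) 1
    rw [h, if_pos rfl] at this
    simpa using this.symm
  · rw [MvPowerSeries.isUnit_iff_constantCoeff, MvPowerSeries.constantCoeff_X]
    exact not_isUnit_zero
  · intro u v huv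
    by_contra hcon
    push_neg at hcon
    obtain ⟨hu, hv⟩ := hcon
    rw [MvPowerSeries.X_dvd_iff] at hu hv huv
    push_neg at hu hv
    obtain ⟨mu, hmu1, hmu⟩ := hu
    obtain ⟨mv, hmv1, hmv⟩ := hv
    have hA : ∃ p, MvPowerSeries.coeff (ee p 0) u ≠ 0 := ⟨mu 0, by rwa [← pure_x mu hmu1]⟩
    have hB : ∃ q, MvPowerSeries.coeff (ee q 0) v ≠ 0 := ⟨mv 0, by rwa [← pure_x mv hmv1]⟩
    set p := Nat.find hA with hp
    set q := Nat.find hB with hq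
    have key : MvPowerSeries.coeff (ee (p + q) 0) (u * v) =
        MvPowerSeries.coeff (ee p 0) u * MvPowerSeries.coeff (ee q 0) v := by
      rw [MvPowerSeries.coeff_mul, ← single0_eq_ee, Finsupp.antidiagonal_single,
        Finset.sum_map]
      rw [Finset.sum_eq_single_of_mem (p, q) (by simp)]
      · simp [single0_eq_ee]
      · rintro ⟨i, j⟩ hij hne
        rw [Finset.HasAntidiagonal.mem_antidiagonal] at hij
        rcases lt_trichotomy i p with hlt | heq | hgt
        · have : MvPowerSeries.coeff (ee i 0) u = 0 := by
            by_contra hh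
            exact Nat.find_min hA hlt hh
          simp only [Function.Embedding.coe_prodMap, Function.Embedding.coeFn_mk, Prod.map_apply,
            single0_eq_ee]
          rw [this, zero_mul]
        · exfalso
          apply hne
          have hjq : j = q := by omega
          rw [heq, hjq]
        · have hjq : j < q := by omega
          have : MvPowerSeries.coeff (ee j 0) v = 0 := by
            by_contra hh
            exact Nat.find_min hB hjq hh
          simp only [Function.Embedding.coe_prodMap, Function.Embedding.coeFn_mk, Prod.map_apply,
            single0_eq_ee]
          rw [this, mul_zero]
    have hz : MvPowerSeries.coeff (ee (p + q) 0) (u * v) = 0 := huv _ (by simp)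
    rw [key] at hz
    exact mul_ne_zero (Nat.find_spec hA) (Nat.find_spec hB) hz

lemma factor_pow : ∀ (n : ℕ) (u v : MvPowerSeries (Fin 2) k),
    u * v = -(MvPowerSeries.X 1 ^ n) →
    ∃ (a b : ℕ) (u' v' : MvPowerSeries (Fin 2) k), a + b = n ∧ IsUnit u' ∧ IsUnit v' ∧
      u = MvPowerSeries.X 1 ^ a * u' ∧ v = MvPowerSeries.X 1 ^ b * v' := by
  intro n
  induction n with
  | zero =>
    intro u v h
    rw [pow_zero] at h
    refine ⟨0, 0, u, v, rfl, ?_, ?_, by rw [pow_zero, one_mul], by rw [pow_zero, one_mul]⟩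
    · exact IsUnit.of_mul_eq_one (a := u) (-v) (by linear_combination -h)
    · exact IsUnit.of_mul_eq_one (a := v) (-u) (by linear_combination -h)
  | succ n ih =>
    intro u v h
    have hdvd : (MvPowerSeries.X 1 : MvPowerSeries (Fin 2) k) ∣ u * v :=
      ⟨-(MvPowerSeries.X 1 ^ n), by rw [h]; ring⟩
    rcases X1_prime.2.2 u v hdvd with hu | hv
    · obtain ⟨u₀, rfl⟩ := hu
      have hX : (MvPowerSeries.X 1 : MvPowerSeries (Fin 2) k) ≠ 0 := X1_prime.1
      have h0 : u₀ * v = -(MvPowerSeries.X 1 ^ n) := by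
        apply mul_left_cancel₀ hX
        rw [← mul_assoc]
        rw [h]; ring
      obtain ⟨a, b, u', v', hab, hu', hv', h1, h2⟩ := ih u₀ v h0
      exact ⟨a + 1, b, u', v', by omega, hu', hv',
        by rw [h1]; ring, h2⟩
    · obtain ⟨v₀, rfl⟩ := hv
      have hX : (MvPowerSeries.X 1 : MvPowerSeries (Fin 2) k) ≠ 0 := X1_prime.1
      have h0 : u * v₀ = -(MvPowerSeries.X 1 ^ n) := by
        apply mul_left_cancel₀ hX
        calc MvPowerSeries.X 1 * (u * v₀) = u * (MvPowerSeries.X 1 * v₀) := by ring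
        _ = -MvPowerSeries.X 1 ^ (n+1) := h
        _ = MvPowerSeries.X 1 * -MvPowerSeries.X 1 ^ n := by ring
      obtain ⟨a, b, u', v', hab, hu', hv', h1, h2⟩ := ih u v₀ h0
      exact ⟨a, b + 1, u', v', by omega, hu', hv', h1, by rw [h2]; ring⟩

lemma not_square (h2 : (2:k) ≠ 0) (g : MvPowerSeries (Fin 2) k) :
    g ^ 2 ≠ (MvPowerSeries.X 0 ^ 3 - MvPowerSeries.X 1 ^ 5) ^ 2 - MvPowerSeries.X 1 ^ 11 := by
  intro h
  set s : MvPowerSeries (Fin 2) k := MvPowerSeries.X 0 ^ 3 - MvPowerSeries.X 1 ^ 5 with hs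
  have hfac : (g - s) * (g + s) = -(MvPowerSeries.X 1 ^ 11) := by
    rw [hs]; linear_combination h
  obtain ⟨a, b, u', v', hab, hu', hv', hu, hv⟩ := factor_pow 11 _ _ hfac
  have hconst_s : MvPowerSeries.constantCoeff s = 0 := by
    simp [hs]
  have hXc : MvPowerSeries.constantCoeff (MvPowerSeries.X (1 : Fin 2)) = 0 :=
    MvPowerSeries.constantCoeff_X 1
  rcases Nat.eq_zero_or_pos a with ha | ha
  · have hb11 : b = 11 := by omega
    have hunit : IsUnit (g - s) := by rw [hu, ha, pow_zero, one_mul]; exact hu'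
    have hcn : MvPowerSeries.constantCoeff (g - s) ≠ 0 :=
      (MvPowerSeries.isUnit_iff_constantCoeff.mp hunit).ne_zero
    have hv0 : MvPowerSeries.constantCoeff (g + s) = 0 := by
      rw [hv, hb11, map_mul, map_pow, MvPowerSeries.constantCoeff_X]
      norm_num
    rw [map_sub, hconst_s, sub_zero] at hcn
    rw [map_add, hconst_s, add_zero] at hv0
    exact hcn hv0
  · rcases Nat.eq_zero_or_pos b with hb | hb
    · have ha11 : a = 11 := by omega
      have hunit : IsUnit (g + s) := by rw [hv, hb, pow_zero, one_mul]; exact hv'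
      have hcn : MvPowerSeries.constantCoeff (g + s) ≠ 0 :=
        (MvPowerSeries.isUnit_iff_constantCoeff.mp hunit).ne_zero
      have hu0 : MvPowerSeries.constantCoeff (g - s) = 0 := by
        rw [hu, ha11, map_mul, map_pow, MvPowerSeries.constantCoeff_X]
        norm_num
      rw [map_add, hconst_s, add_zero] at hcn
      rw [map_sub, hconst_s, sub_zero] at hu0
      exact hcn hu0
    · have hc3 : MvPowerSeries.coeff (ee 3 0) s = 1 := by
        rw [hs, map_sub, MvPowerSeries.coeff_X_pow, MvPowerSeries.coeff_X_pow,
          single0_eq_ee, single1_eq_ee]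
        rw [if_pos rfl, if_neg (by rw [ee_eq_ee_iff]; omega)]
        norm_num
      have d1 : MvPowerSeries.coeff (ee 3 0) (g - s) = 0 := by
        have hdvd : (MvPowerSeries.X 1 : MvPowerSeries (Fin 2) k) ∣ g - s := by
          rw [hu]
          exact Dvd.dvd.mul_right (dvd_pow_self _ ha.ne') u'
        refine MvPowerSeries.X_dvd_iff.mp hdvd _ ?_
        simp [ee, Finsupp.single_apply]
      have d2 : MvPowerSeries.coeff (ee 3 0) (g + s) = 0 := by
        have hdvd : (MvPowerSeries.X 1 : MvPowerSeries (Fin 2) k) ∣ g + s := by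
          rw [hv]
          exact Dvd.dvd.mul_right (dvd_pow_self _ hb.ne') v'
        refine MvPowerSeries.X_dvd_iff.mp hdvd _ ?_
        simp [ee, Finsupp.single_apply]
      rw [map_sub, hc3] at d1
      rw [map_add, hc3] at d2
      apply h2
      linear_combination d2 - d1

lemma part1 (h2 : (2:k) ≠ 0)
    (P : Polynomial (MvPowerSeries (Fin 2) k))
    (hP : P = Polynomial.X ^ 2 -
        Polynomial.C ((MvPowerSeries.X 0 ^ 3 - MvPowerSeries.X 1 ^ 5) ^ 2) +
        Polynomial.C (MvPowerSeries.X 1 ^ 11)) :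
    Irreducible P := by
  haveI : IsDomain (MvPowerSeries (Fin 2) k) := NoZeroDivisors.to_isDomain _
  have hPc : P = Polynomial.X ^ 2 + Polynomial.C
      (MvPowerSeries.X 1 ^ 11 - (MvPowerSeries.X 0 ^ 3 - MvPowerSeries.X 1 ^ 5) ^ 2) := by
    rw [hP, map_sub]; ring
  have hmonic : P.Monic := by rw [hPc]; exact monic_X_pow_add_C _ two_ne_zero
  have hdeg : P.natDegree = 2 := by rw [hPc]; exact natDegree_X_pow_add_C
  by_contra hnot
  obtain ⟨c₁, c₂, h0, h1⟩ := (hmonic.not_irreducible_iff_exists_add_mul_eq_coeff hdeg).mp hnot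
  have hc0 : P.coeff 0 =
      MvPowerSeries.X 1 ^ 11 - (MvPowerSeries.X 0 ^ 3 - MvPowerSeries.X 1 ^ 5) ^ 2 := by
    rw [hPc]; simp only [Polynomial.coeff_add, Polynomial.coeff_X_pow, Polynomial.coeff_C]; norm_num
  have hc1 : P.coeff 1 = 0 := by
    rw [hPc]; simp only [Polynomial.coeff_add, Polynomial.coeff_X_pow, Polynomial.coeff_C]; norm_num
  rw [hc0] at h0
  rw [hc1] at h1
  have hc2 : c₂ = -c₁ := by linear_combination -h1
  exact not_square h2 c₁ (by linear_combination h0 + c₁ * hc2)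

lemma relprime_linear {S : Type*} [CommRing S] [IsDomain S] {a b : S} (hab : a ≠ b) :
    IsRelPrime (Polynomial.X + Polynomial.C a) (Polynomial.X + Polynomial.C b) := by
  intro d hda hdb
  have hdd : d ∣ Polynomial.C (a - b) := by
    have h1 := dvd_sub hda hdb
    have h2 : (Polynomial.X + Polynomial.C a) - (Polynomial.X + Polynomial.C b)
        = Polynomial.C (a - b) := by rw [map_sub]; ring
    rwa [h2] at h1
  obtain ⟨q, hq⟩ := hda
  have hd0 : d ≠ 0 := by
    intro h
    rw [h, zero_mul] at hq
    exact (monic_X_add_C a).ne_zero hq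
  have hq0 : q ≠ 0 := by
    intro h
    rw [h, mul_zero] at hq
    exact (monic_X_add_C a).ne_zero hq
  have hdq : d.natDegree + q.natDegree = 1 := by
    rw [← Polynomial.natDegree_mul hd0 hq0, ← hq, natDegree_X_add_C]
  rcases Nat.eq_zero_or_pos d.natDegree with h0 | h1
  · have hdC : d = Polynomial.C (d.coeff 0) := Polynomial.eq_C_of_natDegree_eq_zero h0
    rw [hdC] at hq ⊢
    rw [Polynomial.isUnit_C]
    have h1 : (1 : S) = d.coeff 0 * q.coeff 1 := by
      have := congrArg (fun p => Polynomial.coeff p 1) hq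
      simpa [Polynomial.coeff_C_mul, Polynomial.coeff_C] using this
    exact IsUnit.of_mul_eq_one _ h1.symm
  · exfalso
    obtain ⟨r, hr⟩ := hdd
    have hC0 : Polynomial.C (a - b) ≠ 0 := by
      rw [Ne, Polynomial.C_eq_zero, sub_eq_zero]
      exact hab
    have hr0 : r ≠ 0 := by
      intro h
      rw [h, mul_zero] at hr
      exact hC0 hr
    have := Polynomial.natDegree_mul hd0 hr0
    rw [← hr, Polynomial.natDegree_C] at this
    omega

lemma build_AB (h2 : (2:k) ≠ 0) (P : Polynomial (MvPowerSeries (Fin 2) k))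
    (ω : Fin 2 → ℝ) (sp : MvPolynomial (Fin 2) k) (hsp : sp ≠ 0)
    (hform : initForm P ω = Polynomial.X ^ 2 -
      Polynomial.C (((sp : MvPowerSeries (Fin 2) k)) ^ 2)) :
    ∃ A B : Polynomial (MvPolynomial (Fin 2) k), A.Monic ∧ B.Monic ∧ A.natDegree = 1 ∧
      B.natDegree = 1 ∧ IsRelPrime A B ∧
      initForm P ω = A.map MvPolynomial.coeToMvPowerSeries.ringHom *
        B.map MvPolynomial.coeToMvPowerSeries.ringHom := by
  refine ⟨Polynomial.X - Polynomial.C sp, Polynomial.X + Polynomial.C sp,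
    monic_X_sub_C _, monic_X_add_C _, natDegree_X_sub_C _, natDegree_X_add_C _, ?_, ?_⟩
  · have hrw : (Polynomial.X - Polynomial.C sp : Polynomial (MvPolynomial (Fin 2) k))
        = Polynomial.X + Polynomial.C (-sp) := by rw [map_neg]; ring
    rw [hrw]
    apply relprime_linear
    intro h
    have h2' : (2 : MvPolynomial (Fin 2) k) ≠ 0 := by
      intro hh
      apply h2
      have hcc := congrArg MvPolynomial.constantCoeff hh
      rw [map_ofNat, map_zero] at hcc
      exact hcc
    have h3 : (2 : MvPolynomial (Fin 2) k) * sp = 0 := by linear_combination -h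
    rcases mul_eq_zero.mp h3 with hh | hh
    · exact h2' hh
    · exact hsp hh
  · rw [hform, Polynomial.map_sub, Polynomial.map_add, Polynomial.map_X, Polynomial.map_C,
      MvPolynomial.coeToMvPowerSeries.ringHom_apply, map_pow]
    ring

set_option maxHeartbeats 1000000 in
/-- Over an algebraically closed field of characteristic `≠ 2`, the polynomial
`P(Z) = Z² − (x³ − y⁵)² + y¹¹` is irreducible in `k[[x,y]][Z]`, yet for every
`ω ∈ ℝ_{>0}²` the initial form `In_{ω'}(P)` is the product of two coprime monic
polynomials of degree `1` in `Z` with coefficients in `k[x,y]`. -/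
theorem example_counterexample {k : Type*} [Field k] [IsAlgClosed k]
    (hchar : ringChar k ≠ 2)
    (P : Polynomial (MvPowerSeries (Fin 2) k))
    (hP : P = Polynomial.X ^ 2 -
        Polynomial.C ((MvPowerSeries.X 0 ^ 3 - MvPowerSeries.X 1 ^ 5) ^ 2) +
        Polynomial.C (MvPowerSeries.X 1 ^ 11)) :
    Irreducible P ∧
      ∀ ω : Fin 2 → ℝ, 0 < ω 0 → 0 < ω 1 →
        ∃ A B : Polynomial (MvPolynomial (Fin 2) k),
          A.Monic ∧ B.Monic ∧ A.natDegree = 1 ∧ B.natDegree = 1 ∧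
          IsRelPrime A B ∧
          initForm P ω =
            A.map MvPolynomial.coeToMvPowerSeries.ringHom *
              B.map MvPolynomial.coeToMvPowerSeries.ringHom := by
  have h2 : (2 : k) ≠ 0 := Ring.two_ne_zero hchar
  refine ⟨part1 h2 P hP, ?_⟩
  intro ω hw0 hw1
  have hPc : P = Polynomial.X ^ 2 + Polynomial.C
      (MvPowerSeries.X 1 ^ 11 - (MvPowerSeries.X 0 ^ 3 - MvPowerSeries.X 1 ^ 5) ^ 2) := by
    rw [hP, map_sub]; ring
  have hdeg : P.natDegree = 2 := by rw [hPc]; exact natDegree_X_pow_add_C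
  have hc0 : P.coeff 0 =
      MvPowerSeries.X 1 ^ 11 - (MvPowerSeries.X 0 ^ 3 - MvPowerSeries.X 1 ^ 5) ^ 2 := by
    rw [hPc]; simp only [Polynomial.coeff_add, Polynomial.coeff_X_pow, Polynomial.coeff_C]; norm_num
  have hc1 : P.coeff 1 = 0 := by
    rw [hPc]; simp only [Polynomial.coeff_add, Polynomial.coeff_X_pow, Polynomial.coeff_C]; norm_num
  have hcoefc : ∀ α : Fin 2 →₀ ℕ, MvPowerSeries.coeff α (P.coeff 0) =
      if α = ee 0 11 then 1 else if α = ee 6 0 then -1 else if α = ee 3 5 then 2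
      else if α = ee 0 10 then -1 else 0 := by
    intro α
    have hsplit : P.coeff 0 = MvPowerSeries.X 1 ^ 11 - MvPowerSeries.X 0 ^ 6
        + (MvPowerSeries.X 0 ^ 3 * MvPowerSeries.X 1 ^ 5
          + MvPowerSeries.X 0 ^ 3 * MvPowerSeries.X 1 ^ 5)
        - MvPowerSeries.X 1 ^ 10 := by rw [hc0]; ring
    have hm3 : MvPowerSeries.coeff α
        (MvPowerSeries.X 0 ^ 3 * MvPowerSeries.X 1 ^ 5 : MvPowerSeries (Fin 2) k)
        = if α = ee 3 5 then 1 else 0 := by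
      rw [MvPowerSeries.X_pow_eq, MvPowerSeries.X_pow_eq, MvPowerSeries.monomial_mul_monomial,
        one_mul, show (Finsupp.single (0 : Fin 2) 3 + Finsupp.single 1 5) = ee 3 5 from rfl,
        MvPowerSeries.coeff_monomial]
    rw [hsplit, map_sub, map_add, map_sub, map_add, hm3,
      MvPowerSeries.coeff_X_pow, MvPowerSeries.coeff_X_pow, MvPowerSeries.coeff_X_pow,
      single0_eq_ee, single1_eq_ee, single1_eq_ee]
    by_cases h1 : α = ee 0 11
    · subst h1
      norm_num [ee_eq_ee_iff]
    · by_cases h2' : α = ee 6 0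
      · subst h2'
        norm_num [ee_eq_ee_iff]
      · by_cases h3 : α = ee 3 5
        · subst h3
          norm_num [ee_eq_ee_iff]
        · by_cases h4 : α = ee 0 10
          · subst h4
            norm_num [ee_eq_ee_iff]
          · simp [h1, h2', h3, h4]
  have hic1 : initCoeff P ω 1 = 0 := by
    apply MvPowerSeries.ext
    intro α
    rw [MvPowerSeries.coeff_apply]
    simp only [initCoeff, seriesCoeff, hc1, map_zero, ite_self]
  have hform : initForm P ω = Polynomial.X ^ 2 + Polynomial.C (initCoeff P ω 0) := by
    unfold initForm
    rw [hdeg, Finset.sum_range_succ, Finset.sum_range_one, hic1]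
    simp
  have hset : {t : ℝ | ∃ (α : Fin 2 →₀ ℕ) (j : ℕ), j < P.natDegree ∧
      seriesCoeff P α j ≠ 0 ∧ t = (∑ i, (α i : ℝ) * ω i) / ((P.natDegree : ℝ) - (j : ℝ))}
      = {3 * ω 0, (3 * ω 0 + 5 * ω 1) / 2, 5 * ω 1, 11 * ω 1 / 2} := by
    ext t
    simp only [Set.mem_setOf_eq, Set.mem_insert_iff, Set.mem_singleton_iff, hdeg]
    constructor
    · rintro ⟨α, j, hj, hne, rfl⟩
      interval_cases j
      · rw [show seriesCoeff P α 0 = MvPowerSeries.coeff α (P.coeff 0) from rfl, hcoefc α] at hne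
        split_ifs at hne with h1 h2' h3 h4
        · subst h1
          right; right; right
          rw [Fin.sum_univ_two]; simp only [ee_apply0, ee_apply1]; push_cast; ring
        · subst h2'
          left
          rw [Fin.sum_univ_two]; simp only [ee_apply0, ee_apply1]; push_cast; ring
        · subst h3
          right; left
          rw [Fin.sum_univ_two]; simp only [ee_apply0, ee_apply1]; push_cast; ring
        · subst h4
          right; right; left
          rw [Fin.sum_univ_two]; simp only [ee_apply0, ee_apply1]; push_cast; ring
        · exact absurd rfl hne
      · rw [show seriesCoeff P α 1 = MvPowerSeries.coeff α (P.coeff 1) from rfl, hc1,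
          map_zero] at hne
        exact absurd rfl hne
    · intro ht
      rcases ht with h | h | h | h
      · refine ⟨ee 6 0, 0, by omega, ?_, ?_⟩
        · rw [show seriesCoeff P (ee 6 0) 0 = MvPowerSeries.coeff (ee 6 0) (P.coeff 0) from rfl,
            hcoefc]
          rw [if_neg (ee_ne (by omega)), if_pos rfl]
          norm_num
        · rw [h, Fin.sum_univ_two]; simp only [ee_apply0, ee_apply1]; push_cast; ring
      · refine ⟨ee 3 5, 0, by omega, ?_, ?_⟩
        · rw [show seriesCoeff P (ee 3 5) 0 = MvPowerSeries.coeff (ee 3 5) (P.coeff 0) from rfl,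
            hcoefc]
          rw [if_neg (ee_ne (by omega)), if_neg (ee_ne (by omega)), if_pos rfl]
          exact h2
        · rw [h, Fin.sum_univ_two]; simp only [ee_apply0, ee_apply1]; push_cast; ring
      · refine ⟨ee 0 10, 0, by omega, ?_, ?_⟩
        · rw [show seriesCoeff P (ee 0 10) 0 = MvPowerSeries.coeff (ee 0 10) (P.coeff 0) from rfl,
            hcoefc]
          rw [if_neg (ee_ne (by omega)), if_neg (ee_ne (by omega)), if_neg (ee_ne (by omega)),
            if_pos rfl]
          norm_num
        · rw [h, Fin.sum_univ_two]; simp only [ee_apply0, ee_apply1]; push_cast; ring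
      · refine ⟨ee 0 11, 0, by omega, ?_, ?_⟩
        · rw [show seriesCoeff P (ee 0 11) 0 = MvPowerSeries.coeff (ee 0 11) (P.coeff 0) from rfl,
            hcoefc]
          rw [if_pos rfl]
          norm_num
        · rw [h, Fin.sum_univ_two]; simp only [ee_apply0, ee_apply1]; push_cast; ring
  rcases lt_trichotomy (3 * ω 0) (5 * ω 1) with hlt | heq | hgt
  · -- x-side dominates : In(P) = Z² - x⁶
    have hω3 : omegaLast P ω = 3 * ω 0 := by
      unfold omegaLast
      rw [hset]
      apply IsLeast.csInf_eq
      constructor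
      · left; rfl
      · intro t ht
        simp only [Set.mem_insert_iff, Set.mem_singleton_iff] at ht
        rcases ht with rfl | rfl | rfl | rfl <;> linarith
    have hic0 : initCoeff P ω 0 = MvPowerSeries.monomial (ee 6 0) (-1) := by
      apply MvPowerSeries.ext
      intro α
      rw [MvPowerSeries.coeff_monomial, MvPowerSeries.coeff_apply]
      simp only [initCoeff]
      rw [show seriesCoeff P α 0 = MvPowerSeries.coeff α (P.coeff 0) from rfl, hcoefc α,
        hdeg, hω3, Fin.sum_univ_two]
      by_cases h1 : α = ee 0 11
      · subst h1
        norm_num [ee_eq_ee_iff]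
        all_goals (first | ring1 | linarith | (intro hcc; exfalso; linarith) | (intro hcc; exact absurd (by linarith) hcc))
      · by_cases h2' : α = ee 6 0
        · subst h2'
          norm_num [ee_eq_ee_iff]
          all_goals (first | ring1 | linarith | (intro hcc; exfalso; linarith) | (intro hcc; exact absurd (by linarith) hcc))
        · by_cases h3 : α = ee 3 5
          · subst h3
            norm_num [ee_eq_ee_iff]
            all_goals (first | ring1 | linarith | (intro hcc; exfalso; linarith) | (intro hcc; exact absurd (by linarith) hcc))
          · by_cases h4 : α = ee 0 10
            · subst h4
              norm_num [ee_eq_ee_iff]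
              all_goals (first | ring1 | linarith | (intro hcc; exfalso; linarith) | (intro hcc; exact absurd (by linarith) hcc))
            · simp [h1, h2', h3, h4]
    apply build_AB h2 P ω (MvPolynomial.X 0 ^ 3) (pow_ne_zero _ (MvPolynomial.X_ne_zero 0))
    have hc6 : (((MvPolynomial.X 0 ^ 3 : MvPolynomial (Fin 2) k) : MvPowerSeries (Fin 2) k)) ^ 2
        = MvPowerSeries.monomial (ee 6 0) 1 := by
      rw [MvPolynomial.coe_pow, MvPolynomial.coe_X, ← pow_mul]
      norm_num
      rw [MvPowerSeries.X_pow_eq, single0_eq_ee]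
    rw [hform, hic0, hc6,
      show (MvPowerSeries.monomial (ee 6 0)) (-1 : k)
        = -((MvPowerSeries.monomial (ee 6 0)) 1) from map_neg _ _, map_neg]
    ring
  · -- tie : In(P) = Z² - (x³ - y⁵)²
    have hω3 : omegaLast P ω = 3 * ω 0 := by
      unfold omegaLast
      rw [hset]
      apply IsLeast.csInf_eq
      constructor
      · left; rfl
      · intro t ht
        simp only [Set.mem_insert_iff, Set.mem_singleton_iff] at ht
        rcases ht with rfl | rfl | rfl | rfl <;> linarith
    have hic0 : initCoeff P ω 0 = MvPowerSeries.monomial (ee 6 0) (-1)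
        + MvPowerSeries.monomial (ee 3 5) 2 + MvPowerSeries.monomial (ee 0 10) (-1) := by
      apply MvPowerSeries.ext
      intro α
      rw [map_add, map_add, MvPowerSeries.coeff_monomial, MvPowerSeries.coeff_monomial,
        MvPowerSeries.coeff_monomial, MvPowerSeries.coeff_apply]
      simp only [initCoeff]
      rw [show seriesCoeff P α 0 = MvPowerSeries.coeff α (P.coeff 0) from rfl, hcoefc α,
        hdeg, hω3, Fin.sum_univ_two]
      by_cases h1 : α = ee 0 11
      · subst h1
        norm_num [ee_eq_ee_iff]
        all_goals (first | ring1 | linarith | (intro hcc; exfalso; linarith) | (intro hcc; exact absurd (by linarith) hcc))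
      · by_cases h2' : α = ee 6 0
        · subst h2'
          norm_num [ee_eq_ee_iff]
          all_goals (first | ring1 | linarith | (intro hcc; exfalso; linarith) | (intro hcc; exact absurd (by linarith) hcc))
        · by_cases h3 : α = ee 3 5
          · subst h3
            norm_num [ee_eq_ee_iff]
            all_goals (first | ring1 | linarith | (intro hcc; exfalso; linarith) | (intro hcc; exact absurd (by linarith) hcc))
          · by_cases h4 : α = ee 0 10
            · subst h4
              norm_num [ee_eq_ee_iff]
              all_goals (first | ring1 | linarith | (intro hcc; exfalso; linarith) | (intro hcc; exact absurd (by linarith) hcc))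
            · simp [h1, h2', h3, h4]
    apply build_AB h2 P ω (MvPolynomial.X 0 ^ 3 - MvPolynomial.X 1 ^ 5) ?_
    · -- the product identity
      have hcoe : ((MvPolynomial.X 0 ^ 3 - MvPolynomial.X 1 ^ 5 : MvPolynomial (Fin 2) k) :
          MvPowerSeries (Fin 2) k)
          = MvPowerSeries.X 0 ^ 3 - MvPowerSeries.X 1 ^ 5 := by
        rw [← MvPolynomial.coeToMvPowerSeries.ringHom_apply, map_sub, map_pow, map_pow,
          MvPolynomial.coeToMvPowerSeries.ringHom_apply,
          MvPolynomial.coeToMvPowerSeries.ringHom_apply, MvPolynomial.coe_X, MvPolynomial.coe_X]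
      have e6 : (MvPowerSeries.X 0 : MvPowerSeries (Fin 2) k) ^ 6
          = MvPowerSeries.monomial (ee 6 0) 1 := by
        rw [MvPowerSeries.X_pow_eq, single0_eq_ee]
      have e35 : (MvPowerSeries.X 0 : MvPowerSeries (Fin 2) k) ^ 3 * MvPowerSeries.X 1 ^ 5
          = MvPowerSeries.monomial (ee 3 5) 1 := by
        rw [MvPowerSeries.X_pow_eq, MvPowerSeries.X_pow_eq, MvPowerSeries.monomial_mul_monomial,
          one_mul, show (Finsupp.single (0 : Fin 2) 3 + Finsupp.single 1 5) = ee 3 5 from rfl]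
      have e10 : (MvPowerSeries.X 1 : MvPowerSeries (Fin 2) k) ^ 10
          = MvPowerSeries.monomial (ee 0 10) 1 := by
        rw [MvPowerSeries.X_pow_eq, single1_eq_ee]
      have hsq : ((MvPowerSeries.X 0 ^ 3 - MvPowerSeries.X 1 ^ 5 : MvPowerSeries (Fin 2) k)) ^ 2
          = MvPowerSeries.monomial (ee 6 0) 1
            - (MvPowerSeries.monomial (ee 3 5) 1 + MvPowerSeries.monomial (ee 3 5) 1)
            + MvPowerSeries.monomial (ee 0 10) 1 := by
        calc ((MvPowerSeries.X 0 ^ 3 - MvPowerSeries.X 1 ^ 5 : MvPowerSeries (Fin 2) k)) ^ 2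
            = MvPowerSeries.X 0 ^ 6
              - (MvPowerSeries.X 0 ^ 3 * MvPowerSeries.X 1 ^ 5
                + MvPowerSeries.X 0 ^ 3 * MvPowerSeries.X 1 ^ 5)
              + MvPowerSeries.X 1 ^ 10 := by ring
          _ = _ := by rw [e6, e35, e10]
      have hCarg : (MvPowerSeries.monomial (ee 6 0)) (-1)
          + (MvPowerSeries.monomial (ee 3 5)) (2 : k)
          + (MvPowerSeries.monomial (ee 0 10)) (-1)
          = -(((MvPolynomial.X 0 ^ 3 - MvPolynomial.X 1 ^ 5 : MvPolynomial (Fin 2) k) :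
              MvPowerSeries (Fin 2) k) ^ 2) := by
        rw [hcoe, hsq,
          show (MvPowerSeries.monomial (ee 6 0)) (-1 : k)
            = -((MvPowerSeries.monomial (ee 6 0)) 1) from
            map_neg (MvPowerSeries.monomial (ee 6 0)) 1,
          show (MvPowerSeries.monomial (ee 0 10)) (-1 : k)
            = -((MvPowerSeries.monomial (ee 0 10)) 1) from
            map_neg (MvPowerSeries.monomial (ee 0 10)) 1,
          show (MvPowerSeries.monomial (ee 3 5)) (2 : k)
            = (MvPowerSeries.monomial (ee 3 5)) 1 + (MvPowerSeries.monomial (ee 3 5)) 1 by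
            rw [← map_add]; norm_num]
        ring
      rw [hform, hic0, hCarg, map_neg]
      ring
    · -- nonvanishing
      intro hzero
      rw [sub_eq_zero] at hzero
      have hcf := congrArg (MvPolynomial.coeff (Finsupp.single (0 : Fin 2) 3)) hzero
      rw [MvPolynomial.coeff_X_pow, MvPolynomial.coeff_X_pow, if_pos rfl,
        if_neg (by rw [single0_eq_ee, single1_eq_ee, ee_eq_ee_iff]; omega)] at hcf
      exact one_ne_zero hcf
  · -- y-side dominates : In(P) = Z² - y¹⁰
    have hω3 : omegaLast P ω = 5 * ω 1 := by
      unfold omegaLast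
      rw [hset]
      apply IsLeast.csInf_eq
      constructor
      · right; right; left; rfl
      · intro t ht
        simp only [Set.mem_insert_iff, Set.mem_singleton_iff] at ht
        rcases ht with rfl | rfl | rfl | rfl <;> linarith
    have hic0 : initCoeff P ω 0 = MvPowerSeries.monomial (ee 0 10) (-1) := by
      apply MvPowerSeries.ext
      intro α
      rw [MvPowerSeries.coeff_monomial, MvPowerSeries.coeff_apply]
      simp only [initCoeff]
      rw [show seriesCoeff P α 0 = MvPowerSeries.coeff α (P.coeff 0) from rfl, hcoefc α,
        hdeg, hω3, Fin.sum_univ_two]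
      by_cases h1 : α = ee 0 11
      · subst h1
        norm_num [ee_eq_ee_iff]
        all_goals (first | ring1 | linarith | (intro hcc; exfalso; linarith) | (intro hcc; exact absurd (by linarith) hcc))
      · by_cases h2' : α = ee 6 0
        · subst h2'
          norm_num [ee_eq_ee_iff]
          all_goals (first | ring1 | linarith | (intro hcc; exfalso; linarith) | (intro hcc; exact absurd (by linarith) hcc))
        · by_cases h3 : α = ee 3 5
          · subst h3
            norm_num [ee_eq_ee_iff]
            all_goals (first | ring1 | linarith | (intro hcc; exfalso; linarith) | (intro hcc; exact absurd (by linarith) hcc))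
          · by_cases h4 : α = ee 0 10
            · subst h4
              norm_num [ee_eq_ee_iff]
              all_goals (first | ring1 | linarith | (intro hcc; exfalso; linarith) | (intro hcc; exact absurd (by linarith) hcc))
            · simp [h1, h2', h3, h4]
    apply build_AB h2 P ω (MvPolynomial.X 1 ^ 5) (pow_ne_zero _ (MvPolynomial.X_ne_zero 1))
    have hc10 : (((MvPolynomial.X 1 ^ 5 : MvPolynomial (Fin 2) k) : MvPowerSeries (Fin 2) k)) ^ 2
        = MvPowerSeries.monomial (ee 0 10) 1 := by
      rw [MvPolynomial.coe_pow, MvPolynomial.coe_X, ← pow_mul]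
      norm_num
      rw [MvPowerSeries.X_pow_eq, single1_eq_ee]
    rw [hform, hic0, hc10,
      show (MvPowerSeries.monomial (ee 0 10)) (-1 : k)
        = -((MvPowerSeries.monomial (ee 0 10)) 1) from
        map_neg (MvPowerSeries.monomial (ee 0 10)) 1, map_neg]
    ring

end IrredCrit
end
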